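/- Let n be a positive integer and u, v ∈ {1,…,n} with u/gcd(u,n) > 1 and v/gcd(v,n) > 1. If u/gcd(u,n) and v/gcd(v,n) have exactly the same set of prime factors, then u and v have equal degrees in D_n. -/

import Mathlib

def diophDeg (n u : ℕ) : ℕ :=
  ((Finset.Icc 1 n).filter (fun v => v ≠ u ∧ Nat.gcd u v ∣ n)).card

lemma mem_pf_iff (n u p : ℕ) (hn : n ≠ 0) (hu : u ≠ 0) :
    p ∈ (u / Nat.gcd u n).primeFactors ↔ n.factorization p < u.factorization p := by
  rw [← Nat.support_factorization, Finsupp.mem_support_iff,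
    Nat.factorization_div (Nat.gcd_dvd_left u n), Nat.factorization_gcd hu hn]
  simp only [Finsupp.tsub_apply, Finsupp.inf_apply]
  omega

lemma gcd_dvd_iff (n u w : ℕ) (hn : n ≠ 0) (hu : u ≠ 0) (hw : w ≠ 0) :
    Nat.gcd u w ∣ n ↔
      ∀ p, n.factorization p < u.factorization p →
        w.factorization p ≤ n.factorization p := by
  have hg : Nat.gcd u w ≠ 0 := Nat.gcd_ne_zero_left hu
  rw [← Nat.factorization_le_iff_dvd hg hn, Nat.factorization_gcd hu hw, Finsupp.le_def]
  constructor <;> intro h p <;> have := h p <;>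
    simp only [Finsupp.inf_apply] at * <;> omega

theorem stmt_18 (n u v : ℕ) (hn : 0 < n)
    (hu : u ∈ Finset.Icc 1 n) (hv : v ∈ Finset.Icc 1 n)
    (hur : 1 < u / Nat.gcd u n) (hvr : 1 < v / Nat.gcd v n)
    (hpf : (u / Nat.gcd u n).primeFactors = (v / Nat.gcd v n).primeFactors) :
    diophDeg n u = diophDeg n v := by
  simp only [Finset.mem_Icc] at hu hv
  have hn0 : n ≠ 0 := hn.ne'
  have hu0 : u ≠ 0 := by omega
  have hv0 : v ≠ 0 := by omega
  -- the dvd conditions agree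
  have hE : ∀ w, w ≠ 0 → (Nat.gcd u w ∣ n ↔ Nat.gcd v w ∣ n) := by
    intro w hw
    rw [gcd_dvd_iff n u w hn0 hu0 hw, gcd_dvd_iff n v w hn0 hv0 hw]
    constructor <;> intro h p hp <;> apply h p
    · rw [← mem_pf_iff n u p hn0 hu0, hpf, mem_pf_iff n v p hn0 hv0]; exact hp
    · rw [← mem_pf_iff n v p hn0 hv0, ← hpf, mem_pf_iff n u p hn0 hu0]; exact hp
  have hund : ¬ u ∣ n := by
    intro h
    rw [Nat.gcd_eq_left h, Nat.div_self (by omega)] at hur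
    omega
  have hvnd : ¬ v ∣ n := by
    intro h
    rw [Nat.gcd_eq_left h, Nat.div_self (by omega)] at hvr
    omega
  unfold diophDeg
  congr 1
  apply Finset.filter_congr
  intro w hw
  simp only [Finset.mem_Icc] at hw
  have hw0 : w ≠ 0 := by omega
  constructor
  · rintro ⟨hne, hd⟩
    refine ⟨?_, (hE w hw0).mp hd⟩
    rintro rfl
    exact hvnd (by simpa [Nat.gcd_self] using (hE w hw0).mp hd)
  · rintro ⟨hne, hd⟩
    refine ⟨?_, (hE w hw0).mpr hd⟩
    rintro rfl
    exact hund (by simpa [Nat.gcd_self] using (hE w hw0).mpr hd)
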